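/- Let n ≥ 4, 1 < p < q < n, and a ∈ (1/2, a*(n,p)]. Then b*(n,1,a,q) ≥ b*(n,p,a,q), where b*(n,p,a,q) = (1/2)·√( [(n−q+1)((p+1)(q−p+1) − 4a²p(q−p))] / [(n−q)((p+1)(q−p) − 4a²p(q−p−1))] ) and a*(n,p) = (1/2)√((1+1/p)(1+1/(n−p))). -/
import Mathlib


/-- `a*(n,p)`. -/
noncomputable def astar (n p : ℕ) : ℝ :=
  (1 / 2) * Real.sqrt ((1 + 1 / (p : ℝ)) * (1 + 1 / ((n : ℝ) - p)))

/-- `b*(n,p,a,q)`. -/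
noncomputable def bstar (n p : ℕ) (a : ℝ) (q : ℕ) : ℝ :=
  (1 / 2) * Real.sqrt (
    (((n : ℝ) - q + 1) *
      (((p : ℝ) + 1) * ((q : ℝ) - p + 1) - 4 * a^2 * p * ((q : ℝ) - p))) /
    (((n : ℝ) - q) *
      (((p : ℝ) + 1) * ((q : ℝ) - p) - 4 * a^2 * p * ((q : ℝ) - p - 1))))

/-- The core real inequality: for `2 ≤ P`, `P + 1 ≤ Q`, `Q + 1 ≤ N`, `1 < t` and
`t ≤ (1 + 1/P)(1 + 1/(N-P))`, the argument of the square root in `b*` is maximized at `P = 1`. -/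
private lemma bstar_aux (P Q N t : ℝ) (hP2 : 2 ≤ P) (hQP : P + 1 ≤ Q) (hNQ : Q + 1 ≤ N)
    (ht1 : 1 < t) (htb : t * (P * (N - P)) ≤ (P + 1) * (N - P + 1)) :
    ((N - Q + 1) * ((P + 1) * (Q - P + 1) - t * P * (Q - P))) /
      ((N - Q) * ((P + 1) * (Q - P) - t * P * (Q - P - 1))) ≤
    ((N - Q + 1) * ((1 + 1) * (Q - 1 + 1) - t * 1 * (Q - 1))) /
      ((N - Q) * ((1 + 1) * (Q - 1) - t * 1 * (Q - 1 - 1))) := by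
  have hx : (0:ℝ) ≤ P - 2 := by linarith
  have hy : (0:ℝ) ≤ Q - P - 1 := by linarith
  have hz : (0:ℝ) ≤ N - Q - 1 := by linarith
  have hPt : P * t ≤ 2 * (P + 1) := by nlinarith
  have hX : 0 ≤ (P + 1) * (Q - P + 1) - t * P * (Q - P) := by nlinarith
  have hY : 0 < (P + 1) * (Q - P) - t * P * (Q - P - 1) := by nlinarith
  have hF : (P + 1) * (N - P + 1) * (Q - 2) < 2 * (Q - 1) * (P * (N - P)) := by
    nlinarith [mul_nonneg hy hz, mul_nonneg hy hy, mul_nonneg hx hz, mul_nonneg hx hy,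
      mul_nonneg (mul_nonneg hx hy) hz, mul_nonneg hx (mul_nonneg hy hy),
      mul_nonneg hx hx, mul_nonneg (mul_nonneg hx hx) hz, mul_nonneg (mul_nonneg hx hx) hy]
  have hF' : (P + 1) * (N - P + 1) * (Q - 1) ≤ 2 * Q * (P * (N - P)) := by
    nlinarith [mul_nonneg hy hz, mul_nonneg hy hy, mul_nonneg hx hz, mul_nonneg hx hy,
      mul_nonneg (mul_nonneg hx hy) hz, mul_nonneg hx (mul_nonneg hy hy),
      mul_nonneg hx hx, mul_nonneg (mul_nonneg hx hx) hz, mul_nonneg (mul_nonneg hx hx) hy]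
  have hY1 : 0 < (1 + 1) * (Q - 1) - t * 1 * (Q - 1 - 1) := by nlinarith
  have hX1 : 0 ≤ (1 + 1) * (Q - 1 + 1) - t * 1 * (Q - 1) := by nlinarith
  have hC : (0:ℝ) < N - Q + 1 := by linarith
  have hC' : (0:ℝ) < N - Q := by linarith
  have hkey : ((P + 1) * (Q - P + 1) - t * P * (Q - P)) * ((1 + 1) * (Q - 1) - t * 1 * (Q - 1 - 1))
      ≤ ((1 + 1) * (Q - 1 + 1) - t * 1 * (Q - 1)) * ((P + 1) * (Q - P) - t * P * (Q - P - 1)) := by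
    nlinarith [mul_nonneg (mul_nonneg (by linarith : (0:ℝ) ≤ P - 1) (by linarith : (0:ℝ) ≤ t - 1))
      (by linarith : (0:ℝ) ≤ 2 * (P + 1) - P * t)]
  rw [div_le_div_iff₀ (by positivity) (by positivity)]
  nlinarith [mul_nonneg (mul_pos hC hC').le (sub_nonneg.mpr hkey)]

/-- Placing the increased entry `a` at position `p = 1` maximizes the allowable `b`:
`b*(n,1,a,q) ≥ b*(n,p,a,q)`. -/
theorem bstar_p_one_ge
    (n p q : ℕ) (a : ℝ) (hn : 4 ≤ n) (hp : 1 < p) (hpq : p < q) (hq : q < n)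
    (ha : 1/2 < a) (ha' : a ≤ astar n p) :
    bstar n p a q ≤ bstar n 1 a q := by
  have hP2 : (2 : ℝ) ≤ (p : ℝ) := by exact_mod_cast hp
  have hQP : (p : ℝ) + 1 ≤ (q : ℝ) := by exact_mod_cast hpq
  have hNQ : (q : ℝ) + 1 ≤ (n : ℝ) := by exact_mod_cast hq
  have hP0 : (0:ℝ) < (p : ℝ) := by linarith
  have hNP : (0:ℝ) < (n : ℝ) - p := by linarith
  have ha0 : 0 < a := by linarith
  have ht1 : 1 < 4 * a ^ 2 := by nlinarith
  have htb : 4 * a ^ 2 * ((p : ℝ) * ((n : ℝ) - p)) ≤ ((p : ℝ) + 1) * ((n : ℝ) - p + 1) := by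
    have harg : (0:ℝ) ≤ (1 + 1 / (p:ℝ)) * (1 + 1 / ((n:ℝ) - p)) := by positivity
    have h1 : a ^ 2 ≤ ((1/2) * Real.sqrt ((1 + 1 / (p:ℝ)) * (1 + 1 / ((n:ℝ) - p)))) ^ 2 := by
      have h := ha'
      unfold astar at h
      exact pow_le_pow_left₀ ha0.le h 2
    rw [mul_pow, Real.sq_sqrt harg] at h1
    have h2 : 4 * a ^ 2 ≤ (1 + 1 / (p:ℝ)) * (1 + 1 / ((n:ℝ) - p)) := by nlinarith
    have h3 : (1 + 1 / (p:ℝ)) * (1 + 1 / ((n:ℝ) - p)) * ((p:ℝ) * ((n:ℝ) - p))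
        = ((p:ℝ) + 1) * ((n:ℝ) - p + 1) := by field_simp
    calc 4 * a ^ 2 * ((p:ℝ) * ((n:ℝ) - p))
        ≤ (1 + 1 / (p:ℝ)) * (1 + 1 / ((n:ℝ) - p)) * ((p:ℝ) * ((n:ℝ) - p)) :=
          mul_le_mul_of_nonneg_right h2 (by positivity)
      _ = ((p:ℝ) + 1) * ((n:ℝ) - p + 1) := h3
  have key := bstar_aux (p:ℝ) (q:ℝ) (n:ℝ) (4 * a ^ 2) hP2 hQP hNQ ht1 htb
  unfold bstar
  rw [Nat.cast_one]
  exact mul_le_mul_of_nonneg_left (Real.sqrt_le_sqrt key) (by norm_num)
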